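/- Let m = p^α be a prime power and let A be a matrix over Z_m whose column space (the subgroup of Z_m^k generated by its columns) has rank r, where the rank of a finite abelian p-group ∏ Z_{p^{α_i}} is the number of factors in its invariant factor decomposition. Then there exists a subset of r rows of A that generate the row space of A. -/

import Mathlib

open Finset

/-- The rank of an additive abelian group: the minimal `r` such that it is isomorphic
to a product of `r` cyclic groups. -/
noncomputable def groupRank (G : Type*) [AddCommGroup G] : ℕ :=
  sInf {r : ℕ | ∃ c : Fin r → ℕ, Nonempty (G ≃+ ((i : Fin r) → ZMod (c i)))}

/-- The subgroup of `ZMod m ^ k` generated by the columns of a matrix. -/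
def colSpan {m k l : ℕ} (A : Matrix (Fin k) (Fin l) (ZMod m)) :
    AddSubgroup (Fin k → ZMod m) :=
  AddSubgroup.closure (Set.range fun j i => A i j)

/-- The rank of a matrix over `ZMod m`: the rank of its column space. -/
noncomputable def matrixRank {m k l : ℕ} (A : Matrix (Fin k) (Fin l) (ZMod m)) : ℕ :=
  groupRank (colSpan A)

namespace RankAux


variable {G H : Type*} [AddCommGroup G] [AddCommGroup H]

/-- multiplication by `n` as an `AddMonoidHom`. -/
def nsmulHom (n : ℕ) (G : Type*) [AddCommGroup G] : G →+ G where
  toFun x := n • x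
  map_zero' := smul_zero n
  map_add' x y := nsmul_add x y n

@[simp] lemma nsmulHom_apply (n : ℕ) (x : G) : nsmulHom n G x = n • x := rfl

/-- The subgroup `nG`. -/
def pSub (n : ℕ) (G : Type*) [AddCommGroup G] : AddSubgroup G := (nsmulHom n G).range

lemma mem_pSub {n : ℕ} {x : G} : x ∈ pSub n G ↔ ∃ y, n • y = x := Iff.rfl

lemma pSub_map_equiv (e : G ≃+ H) (n : ℕ) :
    (pSub n G).map e.toAddMonoidHom = pSub n H := by
  ext x
  simp only [AddSubgroup.mem_map]
  constructor
  · rintro ⟨y, ⟨z, rfl⟩, rfl⟩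
    exact ⟨e z, by simp⟩
  · rintro ⟨y, rfl⟩
    exact ⟨n • e.symm y, ⟨e.symm y, rfl⟩, by simp⟩

lemma card_pSub_congr (e : G ≃+ H) (n : ℕ) : Nat.card (pSub n G) = Nat.card (pSub n H) := by
  rw [← pSub_map_equiv e n]
  exact Nat.card_congr ((pSub n G).equivMapOfInjective e.toAddMonoidHom e.injective).toEquiv

lemma pSub_pi {ι : Type*} [Fintype ι] (M : ι → Type*) [∀ i, AddCommGroup (M i)] (n : ℕ) :
    pSub n (∀ i, M i) = AddSubgroup.pi Set.univ (fun i => pSub n (M i)) := by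
  ext x
  constructor
  · rintro ⟨y, rfl⟩ i _
    exact ⟨y i, rfl⟩
  · intro hx
    choose y hy using fun i => hx i (Set.mem_univ i)
    exact ⟨y, funext hy⟩

lemma card_pi_subgroup {ι : Type*} [Fintype ι] {M : ι → Type*} [∀ i, AddCommGroup (M i)]
    (K : ∀ i, AddSubgroup (M i)) :
    Nat.card (AddSubgroup.pi Set.univ K) = ∏ i, Nat.card (K i) := by
  rw [← Nat.card_pi]
  refine Nat.card_congr ⟨fun x i => ⟨x.1 i, x.2 i (Set.mem_univ i)⟩,
    fun y => ⟨fun i => y i, fun i _ => (y i).2⟩, fun x => rfl, fun y => rfl⟩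

lemma card_pSub_zmod (n : ℕ) (c : ℕ) [NeZero c] :
    Nat.card (pSub n (ZMod c)) = c / c.gcd n := by
  have h1 : pSub n (ZMod c) = AddSubgroup.zmultiples ((n : ZMod c)) := by
    ext x
    rw [mem_pSub, AddSubgroup.mem_zmultiples_iff]
    constructor
    · rintro ⟨y, rfl⟩
      refine ⟨(y.val : ℤ), ?_⟩
      rw [zsmul_eq_mul, nsmul_eq_mul]
      push_cast
      rw [ZMod.natCast_val, ZMod.cast_id]
      ring
    · rintro ⟨k, rfl⟩
      refine ⟨((k : ZMod c)), ?_⟩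
      rw [nsmul_eq_mul, zsmul_eq_mul]
      ring
  rw [h1, Nat.card_zmultiples, ZMod.addOrderOf_coe n (NeZero.ne c)]



variable {G H : Type*} [AddCommGroup G] [AddCommGroup H]

/-- card of pSub for a pi-type of ZMods. -/
lemma card_data {ι : Type} [Fintype ι] (n : ι → ℕ) [∀ i, NeZero (n i)] (p : ℕ)
    (f : G ≃+ ∀ i, ZMod (n i)) :
    Nat.card G = ∏ i, n i ∧ Nat.card (pSub p G) = ∏ i, (n i / (n i).gcd p) := by
  constructor
  · rw [Nat.card_congr f.toEquiv, Nat.card_pi]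
    exact Finset.prod_congr rfl fun i _ => Nat.card_zmod _
  · rw [card_pSub_congr f, pSub_pi, card_pi_subgroup]
    exact Finset.prod_congr rfl fun i _ => card_pSub_zmod p (n i)

lemma card_eq_card_pSub_mul_pow {p : ℕ} (hp : p.Prime) {α : ℕ}
    (G : Type*) [AddCommGroup G] [Finite G] (h : ∀ x : G, p ^ α • x = 0) :
    Nat.card G = Nat.card (pSub p G) * p ^ groupRank G := by
  classical
  obtain ⟨ι, hι, n, hn1, ⟨e⟩⟩ := AddCommGroup.equiv_directSum_zmod_of_finite' G
  let f : G ≃+ ∀ i, ZMod (n i) := e.trans (DirectSum.addEquivProd _)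
  haveI hNZ : ∀ i, NeZero (n i) := fun i => ⟨by have := hn1 i; omega⟩
  have hkillpi : ∀ y : (∀ i, ZMod (n i)), p ^ α • y = 0 := by
    intro y
    have h1 := congrArg f (h (f.symm y))
    rwa [map_nsmul, AddEquiv.apply_symm_apply, map_zero] at h1
  have hdvd : ∀ i, n i ∣ p ^ α := by
    intro i
    have h1 := congrFun (hkillpi (Pi.single i 1)) i
    rw [Pi.smul_apply, Pi.single_eq_same, Pi.zero_apply, nsmul_eq_mul, mul_one] at h1
    exact (ZMod.natCast_eq_zero_iff _ _).mp h1
  have hpdvd : ∀ i, p ∣ n i := by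
    intro i
    obtain ⟨b, hb⟩ := (Nat.dvd_prime_pow hp).mp (hdvd i)
    rcases Nat.eq_zero_or_pos b with hb0 | hb0
    · exfalso; have := hn1 i; rw [hb.2, hb0, pow_zero] at this; omega
    · rw [hb.2]; exact dvd_pow_self p hb0.ne'
  have hgcd : ∀ i, (n i).gcd p = p := fun i => by
    rw [Nat.gcd_comm]; exact Nat.gcd_eq_left (hpdvd i)
  obtain ⟨hcardG, hcardP⟩ := card_data n p f
  set t := Fintype.card ι with ht
  have hkey : Nat.card G = Nat.card (pSub p G) * p ^ t := by
    rw [hcardG, hcardP]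
    have : ∀ i ∈ Finset.univ (α := ι), n i = (n i / (n i).gcd p) * p := by
      intro i _
      rw [hgcd i, Nat.div_mul_cancel (hpdvd i)]
    rw [Finset.prod_congr rfl this, Finset.prod_mul_distrib, Finset.prod_const,
      Finset.card_univ]
  have hrank : groupRank G = t := by
    have hmem : t ∈ {r : ℕ | ∃ c : Fin r → ℕ, Nonempty (G ≃+ ((i : Fin r) → ZMod (c i)))} := by
      refine ⟨fun j => n ((Fintype.equivFin ι).symm j), ⟨f.trans ?_⟩⟩
      exact (RingEquiv.piCongrLeft' (fun i => ZMod (n i)) (Fintype.equivFin ι)).toAddEquiv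
    refine le_antisymm (Nat.sInf_le hmem) (le_csInf ⟨t, hmem⟩ ?_)
    rintro r ⟨c, ⟨g⟩⟩
    -- all c j ≠ 0
    have hcard' : Nat.card G = ∏ j, c j := by
      rw [Nat.card_congr g.toEquiv, Nat.card_pi]
      exact Finset.prod_congr rfl fun j _ => Nat.card_zmod _
    haveI : ∀ j, NeZero (c j) := by
      intro j
      refine ⟨fun hc0 => ?_⟩
      have hpos : 0 < Nat.card G := Nat.card_pos
      rw [hcard'] at hpos
      have := Finset.prod_eq_zero (Finset.mem_univ j) hc0
      omega
    obtain ⟨hg1, hg2⟩ := card_data c p g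
    have hle : Nat.card G ≤ Nat.card (pSub p G) * p ^ r := by
      rw [hg1, hg2]
      calc ∏ j, c j = ∏ j, (c j / (c j).gcd p) * ((c j).gcd p) := by
            refine Finset.prod_congr rfl fun j _ => ?_
            rw [Nat.div_mul_cancel (Nat.gcd_dvd_left _ _)]
        _ ≤ ∏ j, (c j / (c j).gcd p) * p := by
            refine Finset.prod_le_prod (fun _ _ => Nat.zero_le _) (fun j _ => ?_)
            exact Nat.mul_le_mul_left _ (Nat.le_of_dvd hp.pos (Nat.gcd_dvd_right _ _))
        _ = (∏ j, (c j / (c j).gcd p)) * p ^ r := by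
            rw [Finset.prod_mul_distrib, Finset.prod_const, Finset.card_univ, Fintype.card_fin]
    rw [hkey] at hle
    have hpos : 0 < Nat.card (pSub p G) := Nat.card_pos
    have := Nat.le_of_mul_le_mul_left (by linarith [hle] : Nat.card (pSub p G) * p ^ t ≤ Nat.card (pSub p G) * p ^ r) hpos
    exact (Nat.pow_le_pow_iff_right hp.one_lt).mp this
  rw [hrank, hkey]





lemma closure_eq_span_toAddSubgroup (n : ℕ) {M : Type*} [AddCommGroup M] [Module (ZMod n) M]
    (S : Set M) : AddSubgroup.closure S = (Submodule.span (ZMod n) S).toAddSubgroup := by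
  apply le_antisymm
  · exact (AddSubgroup.closure_le _).mpr Submodule.subset_span
  · have h2 : Submodule.span (ZMod n) S ≤ AddSubgroup.toZModSubmodule n (AddSubgroup.closure S) :=
      Submodule.span_le.mpr (fun x hx => AddSubgroup.subset_closure hx)
    intro x hx
    exact h2 hx

lemma eq_top_of_sup_pSub {p α : ℕ} (h : ∀ x : G, p ^ α • x = 0)
    {H : AddSubgroup G} (hH : H ⊔ pSub p G = ⊤) : H = ⊤ := by
  have key : ∀ m : ℕ, ∀ x : G, x ∈ H ⊔ pSub (p ^ m) G := by
    intro m
    induction m with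
    | zero =>
      intro x
      refine AddSubgroup.mem_sup_right ⟨x, ?_⟩
      show p ^ 0 • x = x
      rw [pow_zero, one_nsmul]
    | succ m ih =>
      intro x
      obtain ⟨a, ha, b, hb, rfl⟩ := AddSubgroup.mem_sup.mp (ih x)
      obtain ⟨y, rfl⟩ := hb
      have hy : y ∈ H ⊔ pSub p G := hH ▸ AddSubgroup.mem_top y
      obtain ⟨c, hc, d, hd, rfl⟩ := AddSubgroup.mem_sup.mp hy
      obtain ⟨z, rfl⟩ := hd
      refine AddSubgroup.mem_sup.mpr ⟨a + p ^ m • c, H.add_mem ha (H.nsmul_mem hc _),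
        p ^ (m + 1) • z, ⟨z, rfl⟩, ?_⟩
    -- goal : a + p^m•c + p^(m+1)•z = a + nsmulHom (p^m) G (c + nsmulHom p G z)
      show a + p ^ m • c + p ^ (m + 1) • z = a + p ^ m • (c + p • z)
      rw [smul_add, pow_succ, mul_comm, mul_nsmul, add_assoc]
  have hbot : pSub (p ^ α) G = ⊥ := by
    ext x
    simp only [AddSubgroup.mem_bot]
    constructor
    · rintro ⟨y, rfl⟩; exact h y
    · rintro rfl; exact ⟨0, smul_zero _⟩
  rw [eq_top_iff]
  intro x _
  have := key α x
  rwa [hbot, sup_bot_eq] at this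

lemma exists_generating_subset {p α : ℕ} (hp : p.Prime) (G : Type*) [AddCommGroup G] [Finite G]
    (h : ∀ x : G, p ^ α • x = 0) {k : ℕ} (v : Fin k → G)
    (hv : AddSubgroup.closure (Set.range v) = ⊤) :
    ∃ s : Finset (Fin k), s.card = groupRank G ∧ AddSubgroup.closure (v '' ↑s) = ⊤ := by
  classical
  haveI : Fact p.Prime := ⟨hp⟩
  set pG := pSub p G with hpGdef
  have hsmul : ∀ x : G, p • x ∈ pG := fun x => ⟨x, rfl⟩
  haveI instV : Module (ZMod p) (G ⧸ pG) := QuotientAddGroup.zmodModule hsmul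
  set π := QuotientAddGroup.mk' pG with hπdef
  have hsur : Function.Surjective π := QuotientAddGroup.mk'_surjective pG
  have hclosV : AddSubgroup.closure (Set.range (π ∘ v)) = ⊤ := by
    rw [Set.range_comp, ← AddMonoidHom.map_closure, hv, ← AddMonoidHom.range_eq_map]
    exact AddMonoidHom.range_eq_top_of_surjective π hsur
  have hspan : Submodule.span (ZMod p) (Set.range (⇑π ∘ v)) = ⊤ := by
    rw [closure_eq_span_toAddSubgroup p] at hclosV
    apply top_unique
    intro x _
    have hx : x ∈ (Submodule.span (ZMod p) (Set.range (⇑π ∘ v))).toAddSubgroup := by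
      rw [hclosV]; trivial
    exact hx
  obtain ⟨b, hbsub, hbspan, hbind⟩ := exists_linearIndependent (ZMod p) (Set.range (π ∘ v))
  rw [hspan] at hbspan
  haveI : Fintype b := (Set.toFinite b).fintype
  let B : Module.Basis b (ZMod p) (G ⧸ pG) := Module.Basis.mk hbind
    (by rw [Subtype.range_coe, hbspan])
  have hchoice : ∀ x : b, ∃ i : Fin k, π (v i) = (x : G ⧸ pG) := fun x => hbsub x.2
  choose g hg using hchoice
  have hginj : Function.Injective g := fun x y hxy =>
    Subtype.ext (by rw [← hg x, ← hg y, hxy])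
  set s : Finset (Fin k) := Finset.univ.image g with hsdef
  have hcards : s.card = Fintype.card b := by
    rw [hsdef, Finset.card_image_of_injective _ hginj, Finset.card_univ]
  set H := AddSubgroup.closure (v '' (s : Set (Fin k))) with hHdef
  have hmapH : AddSubgroup.map π H = ⊤ := by
    rw [hHdef, AddMonoidHom.map_closure]
    apply top_unique
    rw [closure_eq_span_toAddSubgroup p]
    intro x _
    have hxb : x ∈ Submodule.span (ZMod p) b := by rw [hbspan]; trivial
    have hmono : Submodule.span (ZMod p) b ≤ Submodule.span (ZMod p) (⇑π '' (v '' ↑s)) := by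
      apply Submodule.span_mono
      intro y hy
      refine ⟨v (g ⟨y, hy⟩), ⟨g ⟨y, hy⟩, ?_, rfl⟩, hg ⟨y, hy⟩⟩
      exact Finset.mem_coe.mpr (Finset.mem_image.mpr ⟨⟨y, hy⟩, Finset.mem_univ _, rfl⟩)
    exact hmono hxb
  have hker : π.ker = pG := QuotientAddGroup.ker_mk' pG
  have hsup : H ⊔ pG = ⊤ := by
    have h1 := congrArg (AddSubgroup.comap π) hmapH
    rw [AddSubgroup.comap_map_eq, hker] at h1
    rw [h1]
    exact rfl
  have hHtop : H = ⊤ := eq_top_of_sup_pSub h hsup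
  have hA := card_eq_card_pSub_mul_pow hp G h
  have hLag := AddSubgroup.card_eq_card_quotient_mul_card_addSubgroup pG
  have hVcard : Nat.card (G ⧸ pG) = p ^ groupRank G := by
    have hpos : 0 < Nat.card pG := Nat.card_pos
    have heq : Nat.card (G ⧸ pG) * Nat.card pG = p ^ groupRank G * Nat.card pG := by
      rw [← hLag, hA]; ring
    exact Nat.eq_of_mul_eq_mul_right hpos heq
  haveI : Fintype (G ⧸ pG) := Fintype.ofFinite _
  have hfin : Nat.card (G ⧸ pG) = p ^ Module.finrank (ZMod p) (G ⧸ pG) := by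
    rw [Nat.card_eq_fintype_card, Module.card_eq_pow_finrank (K := ZMod p), ZMod.card]
  have hrk : groupRank G = Fintype.card b := by
    have h1 : Module.finrank (ZMod p) (G ⧸ pG) = Fintype.card b := Module.finrank_eq_card_basis B
    have h2 : p ^ groupRank G = p ^ Module.finrank (ZMod p) (G ⧸ pG) := by rw [← hVcard, ← hfin]
    rw [Nat.pow_right_injective hp.two_le h2, h1]
  exact ⟨s, by rw [hcards, hrk], hHtop⟩



lemma hasEnough (m : ℕ) [NeZero m] {ν : ℕ} (hν : ν ∣ m) :
    HasEnoughRootsOfUnity (Multiplicative (ZMod m)) ν := by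
  constructor
  · refine ⟨Multiplicative.ofAdd ((m / ν : ℕ) : ZMod m), ?_⟩
    have horder : orderOf (Multiplicative.ofAdd ((m / ν : ℕ) : ZMod m)) = ν := by
      rw [orderOf_ofAdd_eq_addOrderOf, ZMod.addOrderOf_coe _ (NeZero.ne m),
        Nat.gcd_eq_right (Nat.div_dvd_of_dvd hν), Nat.div_div_self hν (NeZero.ne m)]
    have hpr := IsPrimitiveRoot.orderOf (Multiplicative.ofAdd ((m / ν : ℕ) : ZMod m))
    rwa [horder] at hpr
  · haveI : IsCyclic (Multiplicative (ZMod m)) := isCyclic_multiplicative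
    haveI : IsCyclic (Multiplicative (ZMod m))ˣ :=
      isCyclic_of_surjective toUnits.toMonoidHom toUnits.surjective
    infer_instance

lemma card_addMonoidHom_zmod {m : ℕ} [NeZero m] (Q : Type*) [AddCommGroup Q] [Finite Q]
    (h : ∀ x : Q, m • x = 0) : Nat.card (Q →+ ZMod m) = Nat.card Q := by
  have hexp : Monoid.exponent (Multiplicative Q) ∣ m := by
    apply Monoid.exponent_dvd_of_forall_pow_eq_one
    intro g
    have : Multiplicative.toAdd (g ^ m) = Multiplicative.toAdd (1 : Multiplicative Q) := by
      simp only [toAdd_pow, toAdd_one]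
      exact h _
    exact Multiplicative.toAdd.injective this
  haveI := hasEnough m hexp
  obtain ⟨E⟩ := CommGroup.monoidHom_mulEquiv_of_hasEnoughRootsOfUnity (Multiplicative Q)
      (Multiplicative (ZMod m))
  calc Nat.card (Q →+ ZMod m)
      = Nat.card (Multiplicative Q →* Multiplicative (ZMod m)) :=
        Nat.card_congr AddMonoidHom.toMultiplicative
    _ = Nat.card (Multiplicative Q →* (Multiplicative (ZMod m))ˣ) :=
        Nat.card_congr (MulEquiv.monoidHomCongrRightEquiv toUnits)
    _ = Nat.card (Multiplicative Q) := Nat.card_congr E.toEquiv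
    _ = Nat.card Q := rfl



variable {m k l : ℕ}

def dotHom (x : Fin l → ZMod m) : (Fin l → ZMod m) →+ ZMod m where
  toFun w := ∑ j, w j * x j
  map_zero' := by simp
  map_add' a b := by
    simp only [Pi.add_apply, add_mul]
    rw [Finset.sum_add_distrib]

lemma dot_single (x : Fin l → ZMod m) (j : Fin l) : dotHom x (Pi.single j 1) = x j := by
  simp [dotHom, Pi.single_apply, ite_mul, one_mul, zero_mul]

def perp (W : AddSubgroup (Fin l → ZMod m)) : AddSubgroup (Fin l → ZMod m) where
  carrier := {x | ∀ w ∈ W, dotHom x w = 0}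
  zero_mem' := by
    intro w hw
    simp [dotHom]
  add_mem' := by
    intro a b ha hb w hw
    have : dotHom (a + b) w = dotHom a w + dotHom b w := by
      simp only [dotHom, AddMonoidHom.coe_mk, ZeroHom.coe_mk, Pi.add_apply, mul_add]
      rw [Finset.sum_add_distrib]
    rw [this, ha w hw, hb w hw, add_zero]
  neg_mem' := by
    intro a ha w hw
    have : dotHom (-a) w = -(dotHom a w) := by
      simp only [dotHom, AddMonoidHom.coe_mk, ZeroHom.coe_mk, Pi.neg_apply, mul_neg]
      rw [Finset.sum_neg_distrib]
    rw [this, ha w hw, neg_zero]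

lemma mem_perp {W : AddSubgroup (Fin l → ZMod m)} {x : Fin l → ZMod m} :
    x ∈ perp W ↔ ∀ w ∈ W, dotHom x w = 0 := Iff.rfl

lemma dot_repr (g : (Fin l → ZMod m) →+ ZMod m) (v : Fin l → ZMod m) :
    g v = dotHom (fun j => g (Pi.single j 1)) v := by
  have hv : v = ∑ j, Pi.single j (v j) := (Finset.univ_sum_single v).symm
  conv_lhs => rw [hv]
  rw [map_sum]
  show _ = ∑ j, v j * g (Pi.single j 1)
  refine Finset.sum_congr rfl fun j _ => ?_
  have h1 : Pi.single j (v j) = v j • (Pi.single j (1 : ZMod m) : Fin l → ZMod m) := by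
    funext j'
    simp only [Pi.smul_apply, Pi.single_apply, smul_eq_mul, mul_ite, mul_one, mul_zero]
  rw [h1, ZMod.map_smul, smul_eq_mul]

lemma card_perp (W : AddSubgroup (Fin l → ZMod m)) :
    Nat.card (perp W) = Nat.card (((Fin l → ZMod m) ⧸ W) →+ ZMod m) := by
  let Φ : perp W → (((Fin l → ZMod m) ⧸ W) →+ ZMod m) := fun x =>
    QuotientAddGroup.lift W (dotHom x.1) (fun w hw => AddMonoidHom.mem_ker.mpr (x.2 w hw))
  have hΦ : Function.Bijective Φ := by
    constructor
    · intro x y hxy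
      apply Subtype.ext; funext j
      have h1 := congrArg (fun f => f (QuotientAddGroup.mk (Pi.single j (1 : ZMod m)))) hxy
      simpa [Φ, QuotientAddGroup.lift_mk, dot_single] using h1
    · intro f
      set g : (Fin l → ZMod m) →+ ZMod m := f.comp (QuotientAddGroup.mk' W) with hgdef
      have hmem : (fun j => g (Pi.single j 1)) ∈ perp W := by
        intro w hw
        rw [← dot_repr g w]
        have h3 : (QuotientAddGroup.mk' W) w = 0 := (QuotientAddGroup.eq_zero_iff w).mpr hw
        show g w = 0
        rw [hgdef, AddMonoidHom.comp_apply, h3, map_zero]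
      refine ⟨⟨fun j => g (Pi.single j 1), hmem⟩, ?_⟩
      apply AddMonoidHom.ext
      intro q
      refine QuotientAddGroup.induction_on q ?_
      intro v
      show QuotientAddGroup.lift W (dotHom _) _ (QuotientAddGroup.mk v) = f _
      rw [QuotientAddGroup.lift_mk, ← dot_repr g v]
      rfl
  exact Nat.card_congr (Equiv.ofBijective Φ hΦ)

def rowSpan (A : Matrix (Fin k) (Fin l) (ZMod m)) : AddSubgroup (Fin l → ZMod m) :=
  AddSubgroup.closure (Set.range fun i => A i)

lemma dotHom_comm (x w : Fin l → ZMod m) : dotHom x w = dotHom w x := by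
  simp only [dotHom, AddMonoidHom.coe_mk, ZeroHom.coe_mk]
  exact Finset.sum_congr rfl fun j _ => mul_comm _ _

def mulHom (A : Matrix (Fin k) (Fin l) (ZMod m)) : (Fin l → ZMod m) →+ (Fin k → ZMod m) where
  toFun x := fun i => dotHom (A i) x
  map_zero' := by funext i; simp
  map_add' a b := by funext i; exact map_add (dotHom (A i)) a b

lemma mulHom_range (A : Matrix (Fin k) (Fin l) (ZMod m)) : (mulHom A).range = colSpan A := by
  apply le_antisymm
  · rintro x ⟨y, rfl⟩
    show mulHom A y ∈ AddSubgroup.closure (Set.range fun j i => A i j)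
    have hx : mulHom A y = ∑ j, y j • (fun i => A i j) := by
      funext i
      rw [Finset.sum_apply]
      show dotHom (A i) y = _
      simp only [dotHom, AddMonoidHom.coe_mk, ZeroHom.coe_mk]
      exact Finset.sum_congr rfl fun j _ => by
        simp [smul_eq_mul, mul_comm]
    rw [hx]
    refine AddSubgroup.sum_mem _ fun j _ => ?_
    have hmem : (fun i => A i j) ∈ AddSubgroup.closure (Set.range fun j i => A i j) :=
      AddSubgroup.subset_closure ⟨j, rfl⟩
    exact ZMod.smul_mem hmem (y j)
  · rw [colSpan]
    rw [AddSubgroup.closure_le]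
    rintro x ⟨j, rfl⟩
    show (fun i => A i j) ∈ (mulHom A).range
    refine ⟨Pi.single j 1, ?_⟩
    funext i
    show dotHom (A i) (Pi.single j 1) = A i j
    rw [dot_single]

lemma mulHom_ker (A : Matrix (Fin k) (Fin l) (ZMod m)) : (mulHom A).ker = perp (rowSpan A) := by
  ext x
  constructor
  · intro hx w hw
    have hle : rowSpan A ≤ (dotHom x).ker := by
      rw [rowSpan, AddSubgroup.closure_le]
      rintro w' ⟨i, rfl⟩
      have := congrFun (AddMonoidHom.mem_ker.mp hx) i
      show dotHom x (A i) = 0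
      rw [dotHom_comm]
      exact this
    exact hle hw
  · intro hx
    rw [AddMonoidHom.mem_ker]
    funext i
    have := hx (A i) (AddSubgroup.subset_closure ⟨i, rfl⟩)
    rw [dotHom_comm] at this
    exact this

lemma card_colSpan_eq_card_rowSpan [NeZero m] (A : Matrix (Fin k) (Fin l) (ZMod m)) :
    Nat.card (colSpan A) = Nat.card (rowSpan A) := by
  have hLag1 := AddSubgroup.card_eq_card_quotient_mul_card_addSubgroup (mulHom A).ker
  have hLag2 := AddSubgroup.card_eq_card_quotient_mul_card_addSubgroup (rowSpan A)
  have hiso : Nat.card ((Fin l → ZMod m) ⧸ (mulHom A).ker) = Nat.card (colSpan A) := by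
    rw [← mulHom_range A]
    exact Nat.card_congr (QuotientAddGroup.quotientKerEquivRange (mulHom A)).toEquiv
  have hkill : ∀ x : (Fin l → ZMod m) ⧸ (rowSpan A), m • x = 0 := by
    intro x
    refine QuotientAddGroup.induction_on x ?_
    intro v
    have h0 : m • v = 0 := by
      funext j
      show m • v j = 0
      rw [nsmul_eq_mul, ZMod.natCast_self, zero_mul]
    rw [← QuotientAddGroup.mk_nsmul, h0]
    rfl
  have hQ := card_addMonoidHom_zmod ((Fin l → ZMod m) ⧸ (rowSpan A)) hkill
  have hperp := card_perp (rowSpan A)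
  rw [hiso, mulHom_ker A, hperp, hQ] at hLag1
  have hpos : 0 < Nat.card ((Fin l → ZMod m) ⧸ (rowSpan A)) := Nat.card_pos
  have heq : Nat.card (colSpan A) * Nat.card ((Fin l → ZMod m) ⧸ (rowSpan A))
      = Nat.card (rowSpan A) * Nat.card ((Fin l → ZMod m) ⧸ (rowSpan A)) := by
    rw [mul_comm (Nat.card (rowSpan A))]
    rw [← hLag1, ← hLag2]
  exact Nat.eq_of_mul_eq_mul_right hpos heq


lemma card_pSub_closure {M : Type*} [AddCommGroup M] (n : ℕ) (S : Set M) :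
    Nat.card (pSub n (AddSubgroup.closure S))
      = Nat.card (AddSubgroup.closure ((fun x => n • x) '' S)) := by
  have e1 : Nat.card (pSub n (AddSubgroup.closure S)) =
      Nat.card ((pSub n (AddSubgroup.closure S)).map (AddSubgroup.closure S).subtype) :=
    Nat.card_congr ((pSub n _).equivMapOfInjective _
      (AddSubgroup.subtype_injective _)).toEquiv
  have e2 : (pSub n (AddSubgroup.closure S)).map (AddSubgroup.closure S).subtype
      = AddSubgroup.map (nsmulHom n M) (AddSubgroup.closure S) := by
    ext x
    constructor
    · rintro ⟨y, ⟨z, h1⟩, rfl⟩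
      refine ⟨(z : M), z.2, ?_⟩
      have := congrArg (fun (w : (AddSubgroup.closure S)) => (w : M)) h1
      simpa using this
    · rintro ⟨z, hz, rfl⟩
      exact ⟨⟨n • z, (AddSubgroup.closure S).nsmul_mem hz n⟩,
        ⟨⟨⟨z, hz⟩, rfl⟩, rfl⟩⟩
  rw [e1, e2, AddMonoidHom.map_closure]
  rfl

end RankAux

set_option maxHeartbeats 1000000 in
set_option synthInstance.maxHeartbeats 400000 in
open RankAux in
theorem rows_spanning_subset (p α k l r : ℕ) (hp : p.Prime) (hα : 0 < α)
    (A : Matrix (Fin k) (Fin l) (ZMod (p ^ α))) (hr : matrixRank A = r) :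
    ∃ s : Finset (Fin k), s.card = r ∧
      AddSubgroup.closure ((fun i => A i) '' ↑s)
        = AddSubgroup.closure (Set.range fun i => A i) := by
  classical
  haveI : NeZero (p ^ α) := NeZero.of_pos (pow_pos hp.pos α)
  haveI hft : Fintype (ZMod (p ^ α)) := ZMod.fintype _
  haveI hft2 : Finite (Fin k → ZMod (p ^ α)) := inferInstance
  haveI hft3 : Finite (Fin l → ZMod (p ^ α)) := inferInstance
  haveI hfc : Finite (colSpan A) := inferInstance
  haveI hfr : Finite (rowSpan A) := inferInstance
  -- killing lemmas
  have hkill_pi : ∀ {n : ℕ} (v : Fin n → ZMod (p ^ α)), p ^ α • v = 0 := by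
    intro n v
    funext j
    show p ^ α • v j = 0
    rw [nsmul_eq_mul, ZMod.natCast_self, zero_mul]
  have hkill_sub : ∀ {n : ℕ} (H : AddSubgroup (Fin n → ZMod (p ^ α))) (x : H),
      p ^ α • x = 0 := by
    intro n H x
    apply Subtype.ext
    show p ^ α • (x : Fin n → ZMod (p ^ α)) = 0
    exact hkill_pi _
  -- the scaled matrix
  set B : Matrix (Fin k) (Fin l) (ZMod (p ^ α)) := Matrix.of (fun i j => p • A i j) with hB
  -- card of pSub of column space
  have h2 : Nat.card (pSub p (colSpan A)) = Nat.card (colSpan B) := by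
    rw [colSpan, card_pSub_closure]
    congr 2
    rw [← Set.range_comp]
    rfl
  have h3 : Nat.card (pSub p (rowSpan A)) = Nat.card (rowSpan B) := by
    rw [rowSpan, card_pSub_closure]
    congr 2
    rw [← Set.range_comp]
    rfl
  have h1 := card_colSpan_eq_card_rowSpan A
  have h4 := card_colSpan_eq_card_rowSpan B
  have hC := card_eq_card_pSub_mul_pow hp (colSpan A) (hkill_sub _)
  have hR := card_eq_card_pSub_mul_pow hp (rowSpan A) (hkill_sub _)
  have hpSubEq : Nat.card (pSub p (colSpan A)) = Nat.card (pSub p (rowSpan A)) := by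
    rw [h2, h3, h4]
  have hpows : Nat.card (pSub p (colSpan A)) * p ^ groupRank (colSpan A)
      = Nat.card (pSub p (colSpan A)) * p ^ groupRank (rowSpan A) := by
    rw [← hC, h1, hR, ← hpSubEq]
  haveI : Nonempty (pSub p (colSpan A)) := ⟨0⟩
  have hpos : 0 < Nat.card (pSub p (colSpan A)) := Nat.card_pos
  have hrank_eq : groupRank (rowSpan A) = r := by
    have := Nat.eq_of_mul_eq_mul_left hpos hpows
    have h5 := Nat.pow_right_injective hp.two_le this
    rw [← h5, ← hr]
    rfl
  -- generators of the row space as a subgroup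
  set v : Fin k → (rowSpan A) := fun i =>
    ⟨A i, AddSubgroup.subset_closure (Set.mem_range_self i)⟩ with hv
  have hvtop : AddSubgroup.closure (Set.range v) = ⊤ := by
    have hpre := AddSubgroup.closure_preimage_eq_top (Set.range fun i => A i)
    have hsets : (AddSubgroup.closure (Set.range fun i => A i)).subtype ⁻¹'
        (Set.range fun i => A i) = Set.range v := by
      ext x
      constructor
      · rintro ⟨i, hi⟩
        exact ⟨i, Subtype.ext hi⟩
      · rintro ⟨i, rfl⟩
        exact ⟨i, rfl⟩
    rw [hsets] at hpre
    exact hpre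
  obtain ⟨s, hs1, hs2⟩ := exists_generating_subset hp (rowSpan A) (hkill_sub _) v hvtop
  refine ⟨s, by rw [hs1, hrank_eq], ?_⟩
  have hmap := congrArg (AddSubgroup.map (rowSpan A).subtype) hs2
  rw [AddMonoidHom.map_closure, ← AddMonoidHom.range_eq_map,
    AddSubgroup.range_subtype] at hmap
  have himg : (rowSpan A).subtype '' (v '' ↑s) = (fun i => A i) '' ↑s := by
    rw [Set.image_image]
    rfl
  rw [himg] at hmap
  exact hmap
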